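/- Let (B, ω) be a finite-dimensional symplectic vector space and A ⊆ B a subspace that is not coisotropic (i.e. the symplectic orthogonal A^⊥ω is not contained in A) and has codimension at least 3. Then there exists a subspace C with A ⊆ C ⊆ B, dim A < dim C < dim B, such that the restriction of ω to C is nondegenerate (C is symplectic). -/

import Mathlib

/-- In a finite-dimensional symplectic vector space `(B, ω)`, a
non-coisotropic subspace `A` of codimension at least 3 is contained in a proper
intermediate symplectic subspace `C`. -/
theorem stmt0 {B : Type*} [AddCommGroup B] [Module ℝ B] [FiniteDimensional ℝ B]
    (ω : LinearMap.BilinForm ℝ B)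
    (hnd : ω.Nondegenerate)
    (halt : ∀ v : B, ω v v = 0)
    (A : Submodule ℝ B)
    (hnotcoiso : ¬ ω.orthogonal A ≤ A)
    (hcodim : Module.finrank ℝ A + 3 ≤ Module.finrank ℝ B) :
    ∃ C : Submodule ℝ B, A ≤ C ∧
      Module.finrank ℝ A < Module.finrank ℝ C ∧
      Module.finrank ℝ C < Module.finrank ℝ B ∧
      (ω.restrict C).Nondegenerate := by
  have hAlt : ω.IsAlt := halt
  have hrefl : ω.IsRefl := hAlt.isRefl
  -- find `u` in `A^⊥` not in `A = (A^⊥)^⊥`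
  obtain ⟨u, huA, hun⟩ := SetLike.not_le_iff_exists.mp hnotcoiso
  have hun' : u ∉ ω.orthogonal (ω.orthogonal A) := by
    rwa [LinearMap.BilinForm.orthogonal_orthogonal hnd hrefl]
  rw [LinearMap.BilinForm.mem_orthogonal_iff] at hun'
  push_neg at hun'
  obtain ⟨w, hwA, hwu⟩ := hun'
  set D : Submodule ℝ B := Submodule.span ℝ {u, w} with hD
  have huD : u ∈ D := Submodule.subset_span (by simp)
  have hwD : w ∈ D := Submodule.subset_span (by simp)
  have hDle : D ≤ ω.orthogonal A := by
    rw [hD, Submodule.span_le]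
    rintro x hx
    rcases hx with rfl | rfl
    · exact huA
    · simpa using hwA
  -- the restriction of ω to D is nondegenerate
  have hDnd : (ω.restrict D).Nondegenerate := by
    refine (LinearMap.IsRefl.nondegenerate_iff_separatingLeft (B := ω.restrict D)
      (fun (x y : D) h => hrefl x.1 y.1 h)).mpr ?_
    rintro ⟨x, hx⟩ h
    obtain ⟨a, b, rfl⟩ := Submodule.mem_span_pair.mp hx
    have h1 := h ⟨u, huD⟩
    have h2 := h ⟨w, hwD⟩
    simp only [LinearMap.BilinForm.restrict_apply, LinearMap.domRestrict_apply, map_add,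
      map_smul, LinearMap.add_apply, LinearMap.smul_apply, smul_eq_mul, halt u, halt w,
      mul_zero, add_zero, zero_add] at h1 h2
    have hb : b = 0 := by
      rcases mul_eq_zero.mp h1 with hb | h0
      · exact hb
      · exact absurd h0 hwu
    have hskew : ω u w = - ω w u := by
      have h3 := halt (u + w)
      simp only [map_add, LinearMap.add_apply, halt u, halt w, zero_add, add_zero] at h3
      exact eq_neg_of_add_eq_zero_right h3
    have huw : ω u w ≠ 0 := by
      rw [hskew]
      simpa using hwu
    have ha : a = 0 := by
      rcases mul_eq_zero.mp h2 with ha | h0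
      · exact ha
      · exact absurd h0 huw
    ext
    simp [ha, hb]
  have hcompl : IsCompl D (ω.orthogonal D) :=
    LinearMap.BilinForm.isCompl_orthogonal_of_restrict_nondegenerate hrefl hDnd
  refine ⟨ω.orthogonal D, ?_, ?_, ?_, ?_⟩
  · exact le_trans (LinearMap.BilinForm.le_orthogonal_orthogonal hrefl)
      (LinearMap.BilinForm.orthogonal_le hDle)
  · have hD2 : Module.finrank ℝ D ≤ 2 := by
      classical
      haveI : Fintype ({u, w} : Set B) := (Set.toFinite _).fintype
      have := finrank_span_le_card (R := ℝ) ({u, w} : Set B)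
      refine this.trans ?_
      calc ({u, w} : Set B).toFinset.card ≤ ({u, w} : Finset B).card := by
            apply Finset.card_le_card
            intro x hx
            simp only [Set.mem_toFinset, Set.mem_insert_iff, Set.mem_singleton_iff] at hx
            simp only [Finset.mem_insert, Finset.mem_singleton]
            exact hx
        _ ≤ 2 := (Finset.card_insert_le _ _).trans (by simp)
    have hC := LinearMap.BilinForm.finrank_orthogonal hnd D
    have hDB : Module.finrank ℝ D ≤ Module.finrank ℝ B := Submodule.finrank_le D
    omega
  · have hD1 : 1 ≤ Module.finrank ℝ D := by
      have hw0 : w ≠ 0 := by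
        intro h0
        apply hwu
        simp [h0]
      have : D ≠ ⊥ := by
        intro h0
        rw [h0] at hwD
        exact hw0 (by simpa using hwD)
      have h0 : Module.finrank ℝ D ≠ 0 := fun h =>
        this (Submodule.finrank_eq_zero.mp h)
      omega
    have hC := LinearMap.BilinForm.finrank_orthogonal hnd D
    have hDB : Module.finrank ℝ D ≤ Module.finrank ℝ B := Submodule.finrank_le D
    omega
  · rw [LinearMap.BilinForm.restrict_nondegenerate_iff_isCompl_orthogonal hrefl,
      LinearMap.BilinForm.orthogonal_orthogonal hnd hrefl]
    exact hcompl.symm
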